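/- Let μ ∈ M̃ and suppose J′, J^μ ⊆ ℤ/fℤ satisfy: μ ∈ J′; T_μ ⊆ J′; T_μ ∩ J^μ = ∅; and i ∈ J′ ⟺ i ∈ J^μ for all i ∉ T_μ. Set s′ = s(b′,J′), s^μ = s(b^μ,J^μ), t′ = t(b′,J′), t^μ = t(b^μ,J^μ). Then for every i ∈ ℤ/fℤ: A_i(s′, s^μ) = p^f − 1 if i = μ or (i ∈ T_μ and i+1 ∈ J₀), and A_i(s′, s^μ) = 0 otherwise; likewise A_i(t^μ, t′) = p^f − 1 if i = μ or (i ∈ T_μ and i+1 ∈ J₀), and A_i(t^μ, t′) = 0 otherwise. -/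

import Mathlib

open scoped Classical
noncomputable section

/-- `Σ(v) = Σ_{i=0}^{f−1} v_i · p^{f−1−i}`. -/
def Sig (p f : ℕ) (v : ZMod f → ℤ) : ℤ :=
  ∑ i ∈ Finset.range f, v (i : ZMod f) * (p : ℤ) ^ (f - 1 - i)

/-- `A_i(c,d) = Σ_{j=1}^{f} p^{f−j} · (c_{i+j} − d_{i+j})`. -/
def Ai (p f : ℕ) (c d : ZMod f → ℤ) (i : ZMod f) : ℤ :=
  ∑ j ∈ Finset.Icc 1 f, (p : ℤ) ^ (f - j) * (c (i + (j : ZMod f)) - d (i + (j : ZMod f)))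

/-- `T_ν`: the maximal run of indices with `k`-value 1 following `ν`. -/
def Trun (f : ℕ) (k : ZMod f → ℤ) (ν : ZMod f) : Set (ZMod f) :=
  {i | ∃ s : ℕ, 1 ≤ s ∧ i = ν + (s : ZMod f) ∧
        ∀ j : ℕ, 1 ≤ j → j ≤ s → k (ν + (j : ZMod f)) = 1}

/-- `b_{i,1} = k_i − 1`. -/
def b1 (f : ℕ) (k : ZMod f → ℤ) : ZMod f → ℤ := fun i => k i - 1

/-- the constantly zero second component. -/
def zero2 (f : ℕ) : ZMod f → ℤ := fun _ => 0

/-- `b′_{i,1}`. -/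
def bp1 (p f : ℕ) (k : ZMod f → ℤ) : ZMod f → ℤ := fun i =>
  if k i = 1 then (if k (i + 1) = 1 then (p : ℤ) - 1 else (p : ℤ))
  else (if k (i + 1) = 1 then k i - 2 else k i - 1)

/-- `b^μ_{i,1}`. -/
def bmu1 (p f : ℕ) (k : ZMod f → ℤ) (μ : ZMod f) : ZMod f → ℤ := fun i =>
  if i = μ then k μ - 1 else bp1 p f k i

/-- `b^μ_{i,2}`. -/
def bmu2 (f : ℕ) (μ : ZMod f) : ZMod f → ℤ := fun i => if i = μ then -1 else 0

/-- `b^Θ_{i,1}`. -/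
def bth1 (p f : ℕ) (k : ZMod f → ℤ) : ZMod f → ℤ := fun i =>
  if k i = 1 then (if k (i + 1) = 1 then (p : ℤ) - 1 else (p : ℤ)) else k i - 1

/-- `b^Θ_{i,2}`. -/
def bth2 (f : ℕ) (k : ZMod f → ℤ) : ZMod f → ℤ := fun i =>
  if k i ≠ 1 ∧ k (i + 1) = 1 then -1 else 0

/-- `s_i(c,S) = c_{i,1}` if `i ∈ S`, else `c_{i,2}`. -/
def sW (f : ℕ) (c1 c2 : ZMod f → ℤ) (S : Set (ZMod f)) : ZMod f → ℤ :=
  fun i => if i ∈ S then c1 i else c2 i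

/-- `t_i(c,S) = c_{i,2}` if `i ∈ S`, else `c_{i,1}`. -/
def tW (f : ℕ) (c1 c2 : ZMod f → ℤ) (S : Set (ZMod f)) : ZMod f → ℤ :=
  fun i => if i ∈ S then c2 i else c1 i

/-- The set `𝒫′` of Definition 3.7 of the paper. -/
def memP' (p f : ℕ) (r : ZMod f → ℤ) : Prop :=
  (∀ i, r i = 0 ∨ r i = 1 ∨ r i = (p : ℤ) - 1 ∨ r i = (p : ℤ)) ∧
  (∀ i, r i = (p : ℤ) → (r (i + 1) = 0 ∨ r (i + 1) = 1)) ∧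
  (∀ i, (r i = 1 ∨ r i = (p : ℤ) - 1) → (r (i + 1) = (p : ℤ) - 1 ∨ r (i + 1) = (p : ℤ))) ∧
  (∀ i, r i = 0 →
    ((∀ j, r j = 0) ∨
      ∃ s t : ℕ, 1 ≤ s ∧ 1 ≤ t ∧
        (∀ j : ℕ, 1 ≤ j → j ≤ s - 1 → r (i + (j : ZMod f)) = 0) ∧
        r (i + (s : ZMod f)) = 1 ∧
        (∀ j : ℕ, 1 ≤ j → j ≤ t - 1 → r (i - (j : ZMod f)) = 0) ∧
        r (i - (t : ZMod f)) = (p : ℤ)))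

/-- The exceptional case of Theorem 3.9 of the paper. -/
def Exceptional (p f : ℕ) (r : ZMod f → ℤ) (J : Set (ZMod f)) : Prop :=
  memP' p f r ∧ (∀ i, (r i = (p : ℤ) - 1 ∨ r i = (p : ℤ)) → i ∈ J) ∧
    (∀ i, r i = 1 → i ∉ J)

/-- Lemma A.6 of the paper: the values of `A_i(s′, s^μ)` and `A_i(t^μ, t′)` when `μ ∈ J′`,
`T_μ ⊆ J′`, `T_μ ∩ J^μ = ∅` and `J′`, `J^μ` agree outside `T_μ`. -/
lemma tele_aux (p f : ℕ) (e c d : ZMod f → ℤ)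
    (h : ∀ x, c x - d x = (p : ℤ) * e (x - 1) - e x) (i : ZMod f) :
    Ai p f c d i = ((p : ℤ) ^ f - 1) * e i := by
  unfold Ai
  have hIcc : Finset.Icc 1 f
      = Finset.map ⟨fun m => m + 1, add_left_injective 1⟩ (Finset.range f) := by
    ext x
    simp only [Finset.mem_Icc, Finset.mem_map, Finset.mem_range, Function.Embedding.coeFn_mk]
    constructor
    · rintro ⟨h1, h2⟩
      exact ⟨x - 1, by omega, by omega⟩
    · rintro ⟨a, ha, rfl⟩
      omega
  rw [hIcc, Finset.sum_map]
  simp only [Function.Embedding.coeFn_mk]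
  have hterm : ∀ m ∈ Finset.range f,
      (p : ℤ) ^ (f - (m + 1)) * (c (i + ((m + 1 : ℕ) : ZMod f)) - d (i + ((m + 1 : ℕ) : ZMod f)))
      = (fun n : ℕ => (p : ℤ) ^ (f - n) * e (i + (n : ZMod f))) m
        - (fun n : ℕ => (p : ℤ) ^ (f - n) * e (i + (n : ZMod f))) (m + 1) := by
    intro m hm
    simp only [Finset.mem_range] at hm
    rw [h]
    have h1 : i + ((m + 1 : ℕ) : ZMod f) - 1 = i + (m : ZMod f) := by push_cast; ring
    rw [h1, mul_sub]
    simp only []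
    congr 1
    rw [← mul_assoc, ← pow_succ]
    congr 2
    omega
  rw [Finset.sum_congr rfl hterm, Finset.sum_range_sub']
  simp only [Nat.sub_zero, Nat.cast_zero, add_zero, Nat.sub_self, pow_zero, one_mul,
    ZMod.natCast_self]
  ring

theorem stmt16 (p f : ℕ) (hp : p.Prime) (hodd : Odd p) (hf : 1 ≤ f)
    (k : ZMod f → ℤ)
    (hk : ∀ i, 1 ≤ k i ∧ k i ≤ (p : ℤ))
    (hone : ∃ i, k i = 1) (hnotone : ∃ i, k i ≠ 1)
    (h21 : ∀ i, ¬(k i = 2 ∧ k (i + 1) = 1))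
    (μ : ZMod f) (hμ : k μ ≠ 1 ∧ k (μ + 1) = 1)
    (J' Jμ : Set (ZMod f))
    (hμJ' : μ ∈ J') (hT1 : Trun f k μ ⊆ J') (hT2 : Trun f k μ ∩ Jμ = ∅)
    (hagree : ∀ i, i ∉ Trun f k μ → (i ∈ J' ↔ i ∈ Jμ)) :
    ∀ i : ZMod f,
      Ai p f (sW f (bp1 p f k) (zero2 f) J') (sW f (bmu1 p f k μ) (bmu2 f μ) Jμ) i
        = (if i = μ ∨ (i ∈ Trun f k μ ∧ k (i + 1) = 1)
            then (p : ℤ) ^ f - 1 else 0) ∧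
      Ai p f (tW f (bmu1 p f k μ) (bmu2 f μ) Jμ) (tW f (bp1 p f k) (zero2 f) J') i
        = (if i = μ ∨ (i ∈ Trun f k μ ∧ k (i + 1) = 1)
            then (p : ℤ) ^ f - 1 else 0) := by
  -- f ≥ 2
  have hf2 : 2 ≤ f := by
    by_contra h
    have hf1 : f = 1 := by omega
    subst hf1
    obtain ⟨i1, h1⟩ := hone
    obtain ⟨i2, h2⟩ := hnotone
    exact h2 (by rw [Subsingleton.elim i2 i1]; exact h1)
  haveI : NeZero f := ⟨by omega⟩
  -- cast injectivity
  have hinj : ∀ a b : ℕ, a < f → b < f → ((a : ZMod f) = (b : ZMod f)) → a = b := by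
    intro a b ha hb h
    have := congrArg ZMod.val h
    rwa [ZMod.val_cast_of_lt ha, ZMod.val_cast_of_lt hb] at this
  -- the length N of the run of ones after μ
  obtain ⟨N, hN1, hNf, hrun, hend⟩ :
      ∃ N : ℕ, 1 ≤ N ∧ N < f ∧ (∀ j : ℕ, 1 ≤ j → j ≤ N → k (μ + (j : ZMod f)) = 1) ∧
        k (μ + ((N + 1 : ℕ) : ZMod f)) ≠ 1 := by
    have hex : ∃ s : ℕ, 1 ≤ s ∧ k (μ + (s : ZMod f)) ≠ 1 :=
      ⟨f, hf, by simpa using hμ.1⟩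
    have hm := Nat.find_spec hex
    have hm2 : 2 ≤ Nat.find hex := by
      rcases Nat.lt_or_ge (Nat.find hex) 2 with h | h
      · exfalso
        have h1 : Nat.find hex = 1 := by
          have := hm.1; omega
        have h2 := hm.2
        rw [h1] at h2
        exact h2 (by simpa using hμ.2)
      · exact h
    have hmf : Nat.find hex ≤ f := Nat.find_le ⟨hf, by simpa using hμ.1⟩
    refine ⟨Nat.find hex - 1, by omega, by omega, ?_, ?_⟩
    · intro j hj1 hj2
      by_contra hc
      exact Nat.find_min hex (by omega) ⟨hj1, hc⟩
    · have h1 : Nat.find hex - 1 + 1 = Nat.find hex := by omega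
      rw [h1]
      exact hm.2
  -- membership in the run
  have hmem : ∀ i, i ∈ Trun f k μ ↔ ∃ s : ℕ, 1 ≤ s ∧ s ≤ N ∧ i = μ + (s : ZMod f) := by
    intro i
    constructor
    · rintro ⟨s, hs1, hsi, hr⟩
      refine ⟨s, hs1, ?_, hsi⟩
      by_contra hc
      exact hend (hr (N + 1) (by omega) (by omega))
    · rintro ⟨s, hs1, hsN, hsi⟩
      exact ⟨s, hs1, hsi, fun j hj1 hj2 => hrun j hj1 (le_trans hj2 hsN)⟩
  have hμnot : μ ∉ Trun f k μ := by
    rw [hmem]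
    rintro ⟨s, hs1, hsN, hs⟩
    have h0 : (s : ZMod f) = ((0 : ℕ) : ZMod f) := by
      have := hs
      push_cast
      linear_combination -this
    have := hinj s 0 (by omega) (by omega) h0
    omega
  have hμJμ : μ ∈ Jμ := (hagree μ hμnot).mp hμJ'
  have hT2' : ∀ i, i ∈ Trun f k μ → i ∉ Jμ := fun i hi hij =>
    Set.eq_empty_iff_forall_notMem.mp hT2 i ⟨hi, hij⟩
  -- the indicator function
  set e : ZMod f → ℤ :=
    fun i => if i = μ ∨ (i ∈ Trun f k μ ∧ k (i + 1) = 1) then 1 else 0 with he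
  -- the pointwise identity for both differences
  have hpt : ∀ x : ZMod f,
      (sW f (bp1 p f k) (zero2 f) J' x - sW f (bmu1 p f k μ) (bmu2 f μ) Jμ x
        = (p : ℤ) * e (x - 1) - e x)
      ∧ (tW f (bmu1 p f k μ) (bmu2 f μ) Jμ x - tW f (bp1 p f k) (zero2 f) J' x
        = (p : ℤ) * e (x - 1) - e x) := by
    intro x
    by_cases hxμ : x = μ
    · subst hxμ
      have heμ : e x = 1 := by simp [he]
      have heμ1 : e (x - 1) = 0 := by
        simp only [he]
        rw [if_neg]
        rintro (h | ⟨-, hk1⟩)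
        · have h1 : ((1 : ℕ) : ZMod f) = ((0 : ℕ) : ZMod f) := by
            push_cast
            linear_combination -h
          have := hinj 1 0 (by omega) (by omega) h1
          omega
        · apply hμ.1
          have h2 : x - 1 + 1 = x := by ring
          rwa [h2] at hk1
      rw [heμ, heμ1]
      constructor
      · simp only [sW, if_pos hμJ', if_pos hμJμ, bp1, bmu1, if_neg hμ.1, if_pos hμ.2]
        norm_num
      · simp only [tW, if_pos hμJ', if_pos hμJμ, bmu2, zero2]
        norm_num
    · by_cases hxT : x ∈ Trun f k μ
      · -- x in the run
        have hkx : k x = 1 := by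
          obtain ⟨s, hs1, hsN, hxs⟩ := (hmem x).mp hxT
          rw [hxs]; exact hrun s hs1 hsN
        have hxJ' : x ∈ J' := hT1 hxT
        have hxJμ : x ∉ Jμ := hT2' x hxT
        have hex2 : e x = if k (x + 1) = 1 then 1 else 0 := by
          simp [he, hxT, hxμ]
        have hex1 : e (x - 1) = 1 := by
          obtain ⟨s, hs1, hsN, hxs⟩ := (hmem x).mp hxT
          simp only [he]
          rw [if_pos]
          rcases eq_or_lt_of_le hs1 with h1 | h2
          · left
            rw [hxs, ← h1]
            push_cast
            ring
          · right
            constructor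
            · rw [hmem]
              refine ⟨s - 1, by omega, by omega, ?_⟩
              rw [hxs]
              push_cast [Nat.cast_sub (show 1 ≤ s by omega)]
              ring
            · have h3 : x - 1 + 1 = x := by ring
              rw [h3]
              exact hkx
        rw [hex1, hex2]
        constructor
        · simp only [sW, if_pos hxJ', if_neg hxJμ, bmu2, if_neg hxμ, bp1, if_pos hkx]
          split_ifs <;> ring
        · simp only [tW, if_pos hxJ', if_neg hxJμ, bmu1, if_neg hxμ, zero2, bp1,
            if_pos hkx]
          split_ifs <;> ring
      · -- x outside {μ} ∪ run
        have he0 : e x = 0 := by simp [he, hxμ, hxT]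
        have he1 : e (x - 1) = 0 := by
          simp only [he]
          rw [if_neg]
          rintro (h | ⟨hT, hk1⟩)
          · apply hxT
            rw [hmem]
            refine ⟨1, le_refl 1, hN1, ?_⟩
            rw [← h]
            push_cast
            ring
          · have hkx : k x = 1 := by
              have h2 : x - 1 + 1 = x := by ring
              rwa [h2] at hk1
            rw [hmem] at hT
            obtain ⟨s, hs1, hsN, hxs⟩ := hT
            have hx' : x = μ + ((s + 1 : ℕ) : ZMod f) := by
              push_cast
              have : x - 1 = μ + (s : ZMod f) := hxs
              linear_combination this
            by_cases hsN' : s + 1 ≤ N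
            · exact hxT ((hmem x).mpr ⟨s + 1, by omega, hsN', hx'⟩)
            · have hsn : s + 1 = N + 1 := by omega
              apply hend
              rw [← hsn, ← hx']
              exact hkx
        rw [he0, he1]
        by_cases hxJ : x ∈ J'
        · have hxJμ : x ∈ Jμ := (hagree x hxT).mp hxJ
          constructor
          · simp only [sW, if_pos hxJ, if_pos hxJμ, bmu1, if_neg hxμ]
            ring
          · simp only [tW, if_pos hxJ, if_pos hxJμ, bmu2, if_neg hxμ, zero2]
            ring
        · have hxJμ : x ∉ Jμ := fun h => hxJ ((hagree x hxT).mpr h)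
          constructor
          · simp only [sW, if_neg hxJ, if_neg hxJμ, bmu2, if_neg hxμ, zero2]
            ring
          · simp only [tW, if_neg hxJ, if_neg hxJμ, bmu1, if_neg hxμ]
            ring
  intro i
  have h1 := tele_aux p f e _ _ (fun x => (hpt x).1) i
  have h2 := tele_aux p f e _ _ (fun x => (hpt x).2) i
  rw [h1, h2]
  simp only [he]
  constructor <;> split_ifs <;> ring
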